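/- Let T be a contraction on a complex Hilbert space H. Then the set H_0 of vectors h ∈ H satisfying ‖T^n h‖ = ‖h‖ = ‖(T*)^n h‖ for all natural numbers n ≥ 1 is a closed linear subspace of H. -/

import Mathlib

open ContinuousLinearMap Filter
open scoped InnerProductSpace

noncomputable section

private lemma contraction_norm_iff
    {H : Type*} [NormedAddCommGroup H] [InnerProductSpace ℂ H] [CompleteSpace H]
    (S : H →L[ℂ] H) (hS : ‖S‖ ≤ 1) (h : H) :
    ‖S h‖ = ‖h‖ ↔ adjoint S (S h) = h := by
  constructor
  · intro he
    have h1 : ‖adjoint S (S h)‖ ≤ ‖S h‖ := by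
      calc ‖adjoint S (S h)‖ ≤ ‖adjoint S‖ * ‖S h‖ := le_opNorm _ _
        _ ≤ 1 * ‖S h‖ := by
            apply mul_le_mul_of_nonneg_right _ (norm_nonneg _)
            rw [← star_eq_adjoint, norm_star]; exact hS
        _ = ‖S h‖ := one_mul _
    have hre : RCLike.re ⟪adjoint S (S h), h⟫_ℂ = ‖S h‖ ^ 2 := by
      rw [adjoint_inner_left, inner_self_eq_norm_sq]
    have hsq : ‖adjoint S (S h) - h‖ ^ 2 ≤ 0 := by
      rw [norm_sub_sq (𝕜 := ℂ), hre]
      nlinarith [norm_nonneg (adjoint S (S h)), norm_nonneg (S h)]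
    have : ‖adjoint S (S h) - h‖ = 0 :=
      le_antisymm (by nlinarith [norm_nonneg (adjoint S (S h) - h)]) (norm_nonneg _)
    rw [norm_eq_zero, sub_eq_zero] at this
    exact this
  · intro he
    have hsq : ‖S h‖ ^ 2 = ‖h‖ ^ 2 := by
      rw [← inner_self_eq_norm_sq (𝕜 := ℂ), ← adjoint_inner_left, he,
        inner_self_eq_norm_sq]
    nlinarith [norm_nonneg (S h), norm_nonneg h]

theorem unitary_part_closed_subspace
    {H : Type*} [NormedAddCommGroup H] [InnerProductSpace ℂ H] [CompleteSpace H]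
    (T : H →L[ℂ] H) (hT : ‖T‖ ≤ 1) :
    ∃ K : Submodule ℂ H, IsClosed (K : Set H) ∧
      (K : Set H) = {h : H | ∀ n : ℕ, 1 ≤ n →
        ‖(T ^ n) h‖ = ‖h‖ ∧ ‖((adjoint T) ^ n) h‖ = ‖h‖} := by
  have hTn : ∀ n : ℕ, 1 ≤ n → ‖T ^ n‖ ≤ 1 := fun n hn =>
    le_trans (norm_pow_le' T hn) (pow_le_one₀ (norm_nonneg T) hT)
  have hadj : ∀ n : ℕ, (adjoint T) ^ n = adjoint (T ^ n) := fun n => by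
    rw [← star_eq_adjoint, ← star_eq_adjoint, ← star_pow]
  have hTan : ∀ n : ℕ, 1 ≤ n → ‖(adjoint T) ^ n‖ ≤ 1 := fun n hn => by
    rw [hadj, ← star_eq_adjoint, norm_star]; exact hTn n hn
  refine ⟨⨅ n : ℕ, ⨅ _ : 1 ≤ n,
      (LinearMap.ker ((adjoint (T ^ n) * T ^ n - 1 : H →L[ℂ] H) : H →ₗ[ℂ] H) ⊓
        LinearMap.ker ((T ^ n * adjoint (T ^ n) - 1 : H →L[ℂ] H) : H →ₗ[ℂ] H)), ?_, ?_⟩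
  · rw [Submodule.coe_iInf]
    refine isClosed_iInter fun n => ?_
    rw [Submodule.coe_iInf]
    refine isClosed_iInter fun hn => ?_
    rw [Submodule.coe_inf]
    exact (isClosed_ker _).inter (isClosed_ker _)
  · ext h
    simp only [SetLike.mem_coe, Submodule.mem_iInf, Submodule.mem_inf,
      LinearMap.mem_ker, Set.mem_setOf_eq, ContinuousLinearMap.coe_coe]
    refine forall_congr' fun n => forall_congr' fun hn => ?_
    have e1 : (adjoint (T ^ n) * T ^ n - 1) h = 0 ↔ adjoint (T ^ n) ((T ^ n) h) = h := by
      simp [sub_eq_zero, mul_apply]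
    have e2 : (T ^ n * adjoint (T ^ n) - 1) h = 0 ↔
        adjoint (adjoint (T ^ n)) (adjoint (T ^ n) h) = h := by
      simp [sub_eq_zero, mul_apply, adjoint_adjoint]
    rw [e1, e2, ← contraction_norm_iff (T ^ n) (hTn n hn) h,
      ← contraction_norm_iff (adjoint (T ^ n)) (by rw [← star_eq_adjoint, norm_star]; exact hTn n hn) h,
      ← hadj]
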